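/- arXiv:2103.05049 — 2 statements merged into one kernel-verified Lean document; each statement's English description precedes it below -/
import Mathlib

section
/- Let Λ ⊆ ℝ^d be a fully Euclidean Meyer set with rank(Λ) = k. Then: (a) if s, r₁, …, rₙ ∈ ℝ^d with r₁, …, rₙ linearly independent over ℤ satisfy s + ∑_{i=1}^{n} cᵢrᵢ ∈ Λ for all integers 0 ≤ cᵢ ≤ N for some N ≥ 1, then n ≤ k; and (b) for each N ∈ ℕ there exist s ∈ ℝ^d and r₁, …, r_k ∈ ℝ^d linearly independent over ℤ such that s + ∑_{i=1}^{k} cᵢrᵢ ∈ Λ for all integers 0 ≤ cᵢ ≤ N. -/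
open scoped Pointwise

/-- A set is relatively dense if some radius `R > 0` works: every open ball of
radius `R` contains a point of the set. -/
def RelativelyDense {d : ℕ} (Λ : Set (EuclideanSpace ℝ (Fin d))) : Prop :=
  ∃ R > (0 : ℝ), ∀ x : EuclideanSpace ℝ (Fin d), ∃ y ∈ Λ, y ∈ Metric.ball x R

/-- A set is uniformly discrete if some radius `r > 0` works: every open ball of
radius `r` contains at most one point of the set. -/
def UniformlyDiscrete {d : ℕ} (S : Set (EuclideanSpace ℝ (Fin d))) : Prop :=
  ∃ r > (0 : ℝ), ∀ x : EuclideanSpace ℝ (Fin d), (S ∩ Metric.ball x r).Subsingleton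

/-- A Meyer set: relatively dense with `Λ - Λ` uniformly discrete. -/
def IsMeyerSet {d : ℕ} (Λ : Set (EuclideanSpace ℝ (Fin d))) : Prop :=
  RelativelyDense Λ ∧ UniformlyDiscrete (Λ - Λ)

/-- A lattice in a topological abelian group: a discrete subgroup with compact
quotient (spelled: there is a compact set of representatives). -/
def IsLattice {E : Type*} [AddCommGroup E] [TopologicalSpace E] (L : AddSubgroup E) : Prop :=
  DiscreteTopology L ∧ ∃ K : Set E, IsCompact K ∧ ∀ x : E, ∃ l ∈ L, x - l ∈ K

/-- A fully Euclidean cut-and-project scheme `(ℝ^d, ℝ^m, ℒ)`: `ℒ` is a lattice in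
`ℝ^d × ℝ^m`, the first projection is injective on `ℒ`, and the image of `ℒ` under the
second projection is dense in `ℝ^m`. -/
def IsCPS (d m : ℕ)
    (L : AddSubgroup (EuclideanSpace ℝ (Fin d) × EuclideanSpace ℝ (Fin m))) : Prop :=
  IsLattice L ∧ (∀ p ∈ L, ∀ q ∈ L, p.1 = q.1 → p = q) ∧
    Dense (Prod.snd '' (L : Set (EuclideanSpace ℝ (Fin d) × EuclideanSpace ℝ (Fin m))))

/-- The projection `Λ(W) = {x : ∃ y ∈ W, (x, y) ∈ ℒ}` of the points of the lattice
whose second coordinate lies in the window `W`. -/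
def cutProject {α β : Type*} [AddCommGroup α] [AddCommGroup β]
    (L : AddSubgroup (α × β)) (W : Set β) : Set α :=
  {x | ∃ y ∈ W, (x, y) ∈ L}

/-- `Λ` contains an li-arithmetic progression of rank `k` and length `N`:
there are a starting point `s` and ratios `r₁, …, r_k`, linearly independent over `ℤ`,
with `s + ∑ cᵢ rᵢ ∈ Λ` for all integers `0 ≤ cᵢ ≤ N`. -/
def HasLiAP {d : ℕ} (Λ : Set (EuclideanSpace ℝ (Fin d))) (k N : ℕ) : Prop :=
  ∃ (s : EuclideanSpace ℝ (Fin d)) (r : Fin k → EuclideanSpace ℝ (Fin d)),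
    LinearIndependent ℤ r ∧
    ∀ c : Fin k → ℕ, (∀ i, c i ≤ N) → s + ∑ i, (c i : ℝ) • r i ∈ Λ

open Submodule Module Metric in
lemma aux_span_top {E : Type*} [NormedAddCommGroup E] [NormedSpace ℝ E] [FiniteDimensional ℝ E]
    (L : AddSubgroup E) (K : Set E) (hK : IsCompact K) (h : ∀ x : E, ∃ l ∈ L, x - l ∈ K) :
    Submodule.span ℝ (L : Set E) = ⊤ := by
  classical
  set S : Submodule ℝ E := Submodule.span ℝ (L : Set E) with hS
  have hcl : IsClosed (S : Set E) := S.closed_of_finiteDimensional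
  rw [eq_top_iff']
  intro x
  obtain ⟨C, hC⟩ : ∃ C, K ⊆ Metric.closedBall 0 C := hK.isBounded.subset_closedBall 0
  obtain ⟨l0, -, hl0⟩ := h 0
  have hC0 : (0:ℝ) ≤ C := le_trans (norm_nonneg (0 - l0)) (by
    simpa [Metric.mem_closedBall, dist_eq_norm] using hC hl0)
  have key : ∀ ε : ℝ, 0 < ε → ∃ s ∈ (S : Set E), dist x s < ε := by
    intro ε hε
    obtain ⟨n, hn⟩ := exists_nat_gt (C / ε)
    have hn1 : (0:ℝ) < (n:ℝ) + 1 := by positivity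
    obtain ⟨l, hl, hKl⟩ := h (((n:ℝ) + 1) • x)
    refine ⟨(1 / ((n:ℝ)+1)) • l, S.smul_mem _ (Submodule.subset_span hl), ?_⟩
    have h1 : ‖((n:ℝ)+1) • x - l‖ ≤ C := by
      simpa [Metric.mem_closedBall, dist_eq_norm] using hC hKl
    have h2 : x - (1 / ((n:ℝ)+1)) • l = (1 / ((n:ℝ)+1)) • (((n:ℝ)+1) • x - l) := by
      rw [smul_sub, smul_smul]
      field_simp
      rw [one_smul]
    have h3 : dist x ((1 / ((n:ℝ)+1)) • l) ≤ C / ((n:ℝ)+1) := by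
      rw [dist_eq_norm, h2, norm_smul, Real.norm_eq_abs, abs_of_pos (by positivity)]
      rw [div_eq_mul_inv C, one_div, mul_comm C _]
      exact mul_le_mul_of_nonneg_left h1 (by positivity)
    refine lt_of_le_of_lt h3 ?_
    rw [div_lt_iff₀ hn1]
    have : C < (n:ℝ) * ε := by
      have := (div_lt_iff₀ hε).mp hn
      linarith
    nlinarith
  have : x ∈ closure (S : Set E) := Metric.mem_closure_iff.mpr key
  rwa [hcl.closure_eq] at this

open Submodule Module Metric in
lemma aux_subset_span_small {E₁ E₂ : Type*} [NormedAddCommGroup E₁] [NormedAddCommGroup E₂]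
    [NormedSpace ℝ E₁] [NormedSpace ℝ E₂]
    (L : AddSubgroup (E₁ × E₂)) (hd : Dense (Prod.snd '' (L : Set (E₁ × E₂))))
    {ε : ℝ} (hε : 0 < ε) :
    (L : Set (E₁ × E₂)) ⊆
      ↑(Submodule.span ℝ {v : E₁ × E₂ | v ∈ L ∧ ‖v.2‖ < ε}) := by
  classical
  set Sε : Set (E₁ × E₂) := {v : E₁ × E₂ | v ∈ L ∧ ‖v.2‖ < ε} with hSε
  have hdens : ∀ (t : E₂) (δ : ℝ), 0 < δ → ∃ z, z ∈ L ∧ ‖z.2 - t‖ < δ := by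
    intro t δ hδ
    obtain ⟨y, ⟨z, hz, rfl⟩, hy⟩ := Metric.mem_closure_iff.mp (hd t) δ hδ
    exact ⟨z, hz, by rwa [dist_comm, dist_eq_norm] at hy⟩
  have main : ∀ n : ℕ, ∀ l, l ∈ L → ‖l.2‖ < (n:ℝ) * (ε/6) →
      l ∈ Submodule.span ℝ Sε := by
    intro n
    induction n with
    | zero =>
      intro l _ hl2
      simp only [Nat.cast_zero, zero_mul] at hl2
      exact absurd hl2 (not_lt.mpr (norm_nonneg _))
    | succ n ih =>
      intro l hl hnorm
      by_cases hsmall : ‖l.2‖ < ε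
      · exact Submodule.subset_span ⟨hl, hsmall⟩
      · push_neg at hsmall
        have hpos : (0:ℝ) < ‖l.2‖ := lt_of_lt_of_le hε hsmall
        set c : ℝ := (ε/3) / ‖l.2‖ with hc
        have hc1 : c ≤ 1 := by rw [hc, div_le_one hpos]; linarith
        have hc0 : 0 ≤ c := by positivity
        set t : E₂ := (1 - c) • l.2 with ht
        have htn : ‖t‖ = ‖l.2‖ - ε/3 := by
          rw [ht, norm_smul, Real.norm_eq_abs, abs_of_nonneg (by linarith), hc]
          field_simp
        have hlt : ‖l.2 - t‖ = ε/3 := by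
          have h4 : l.2 - t = c • l.2 := by
            rw [ht, sub_smul, one_smul, sub_sub_cancel]
          rw [h4, norm_smul, Real.norm_eq_abs, abs_of_nonneg hc0, hc]
          field_simp
        obtain ⟨z, hz, hzt⟩ := hdens t (ε/6) (by positivity)
        have h1 : ‖(l - z).2‖ < ε := by
          have h5 : (l - z).2 = (l.2 - t) + (t - z.2) := by
            simp only [Prod.snd_sub]
            abel
          rw [h5]
          have h6 := norm_add_le (l.2 - t) (t - z.2)
          rw [hlt, norm_sub_rev] at h6
          linarith
        have hnorm' : ‖l.2‖ < ((n:ℝ) + 1) * (ε/6) := by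
          push_cast at hnorm; linarith
        have h2 : ‖z.2‖ < (n:ℝ) * (ε/6) := by
          have h7 : ‖z.2‖ ≤ ‖t‖ + ‖z.2 - t‖ := by
            have := norm_add_le t (z.2 - t)
            simpa [add_sub_cancel] using this
          rw [htn] at h7
          linarith
        have hlz : l - z ∈ Submodule.span ℝ Sε :=
          Submodule.subset_span ⟨L.sub_mem hl hz, h1⟩
        have h8 : l = (l - z) + z := by abel
        rw [h8]
        exact Submodule.add_mem _ hlz (ih z hz h2)
  intro l hl
  obtain ⟨n, hn⟩ := exists_nat_gt (‖l.2‖ / (ε/6))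
  exact main n l hl ((div_lt_iff₀ (by positivity)).mp hn)

open Submodule Module Metric in
lemma aux_exists_li {E : Type*} [NormedAddCommGroup E] [NormedSpace ℝ E] [FiniteDimensional ℝ E]
    (T : Set E) (hT : Submodule.span ℝ T = ⊤) :
    ∃ r : Fin (Module.finrank ℝ E) → E, (∀ i, r i ∈ T) ∧ LinearIndependent ℝ r := by
  classical
  obtain ⟨b, hbT, hspan, hli⟩ := exists_linearIndependent ℝ T
  have hbspan : Submodule.span ℝ (Set.range ((↑) : b → E)) = ⊤ := by
    rw [Subtype.range_coe, hspan, hT]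
  have hfin : b.Finite := hli.setFinite
  haveI := hfin.fintype
  let B : Basis b ℝ E := Basis.mk hli (by rw [hbspan])
  have hcard : Module.finrank ℝ E = Fintype.card b := Module.finrank_eq_card_basis B
  let e : Fin (Module.finrank ℝ E) ≃ b :=
    (Fintype.equivFinOfCardEq hcard.symm).symm
  refine ⟨fun i => ((e i : b) : E), fun i => hbT (e i).2, ?_⟩
  exact hli.comp e e.injective

open Submodule Module Metric in
lemma aux_grid {d m : ℕ} (Λ : Set (EuclideanSpace ℝ (Fin d)))
    (hRD : RelativelyDense Λ)
    (L : AddSubgroup (EuclideanSpace ℝ (Fin d) × EuclideanSpace ℝ (Fin m)))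
    (hcps : IsCPS d m L)
    (W : Set (EuclideanSpace ℝ (Fin m))) (hWc : IsCompact (closure W))
    (hsub : Λ ⊆ cutProject L W) (N : ℕ) :
    ∃ (s : EuclideanSpace ℝ (Fin d)) (r : Fin (d + m) → EuclideanSpace ℝ (Fin d)),
      LinearIndependent ℤ r ∧
      ∀ c : Fin (d + m) → ℕ, (∀ i, c i ≤ N) → s + ∑ i, (c i : ℝ) • r i ∈ Λ := by
  classical
  obtain ⟨R, hR, hRball⟩ := hRD
  obtain ⟨⟨hdisc, K, hKc, hKco⟩, hinj, hdense⟩ := hcps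
  haveI := hdisc
  obtain ⟨CW, hCW⟩ : ∃ CW, closure W ⊆ Metric.closedBall 0 CW :=
    hWc.isBounded.subset_closedBall 0
  -- the finite color set
  set F : Set (EuclideanSpace ℝ (Fin d) × EuclideanSpace ℝ (Fin m)) := {v | v ∈ L ∧ ‖v.1‖ ≤ R ∧ ‖v.2‖ ≤ CW + 1} with hF
  have hFfin : F.Finite := by
    haveI : DiscreteTopology (L : Set (EuclideanSpace ℝ (Fin d) × EuclideanSpace ℝ (Fin m))) := hdisc
    refine Set.Finite.subset
      (Metric.finite_isBounded_inter_isClosed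
        (K := Metric.closedBall (0:EuclideanSpace ℝ (Fin d)) R ×ˢ Metric.closedBall (0:EuclideanSpace ℝ (Fin m)) (CW+1))
        (s := (L : Set (EuclideanSpace ℝ (Fin d) × EuclideanSpace ℝ (Fin m))))
        (isDiscrete_iff_discreteTopology.mpr this)
        (Metric.isBounded_closedBall.prod Metric.isBounded_closedBall)
        AddSubgroup.isClosed_of_discrete) ?_
    rintro v ⟨hvL, hv1, hv2⟩
    exact ⟨⟨by simpa [Metric.mem_closedBall, dist_eq_norm] using hv1,
      by simpa [Metric.mem_closedBall, dist_eq_norm] using hv2⟩, hvL⟩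
  haveI hFfinite : Finite ↥F := hFfin.to_subtype
  -- the alphabet
  set α := Fin (d + m) → Fin (N + 1) with hα
  -- Hales-Jewett
  obtain ⟨ι, hι, hHJ⟩ := Combinatorics.Line.exists_mono_in_high_dimension α ↥F
  haveI := hι
  set n : ℕ := Fintype.card ι with hn
  -- small independent family
  set η : ℝ := 1 / (n * (d + m) * N + 1) with hη
  have hηpos : 0 < η := by positivity
  have hspanL : Submodule.span ℝ (L : Set (EuclideanSpace ℝ (Fin d) × EuclideanSpace ℝ (Fin m))) = ⊤ := aux_span_top L K hKc hKco
  have hspanS : Submodule.span ℝ {v : EuclideanSpace ℝ (Fin d) × EuclideanSpace ℝ (Fin m) | v ∈ L ∧ ‖v.2‖ < η} = ⊤ := by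
    rw [eq_top_iff, ← hspanL, Submodule.span_le]
    exact aux_subset_span_small L hdense hηpos
  obtain ⟨r0, hr0mem, hr0li⟩ := aux_exists_li _ hspanS
  have hfr : Module.finrank ℝ (EuclideanSpace ℝ (Fin d) × EuclideanSpace ℝ (Fin m)) = d + m := by
    simp [finrank_prod, finrank_euclideanSpace]
  let e : Fin (d + m) ≃ Fin (Module.finrank ℝ (EuclideanSpace ℝ (Fin d) × EuclideanSpace ℝ (Fin m))) := finCongr hfr.symm
  set r : Fin (d + m) → EuclideanSpace ℝ (Fin d) × EuclideanSpace ℝ (Fin m) := r0 ∘ e with hr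
  have hrL : ∀ i, r i ∈ L := fun i => (hr0mem (e i)).1
  have hrsmall : ∀ i, ‖(r i).2‖ < η := fun i => (hr0mem (e i)).2
  have hrli : LinearIndependent ℝ r := hr0li.comp e e.injective
  -- the word-to-point maps
  set ψ : α → EuclideanSpace ℝ (Fin d) × EuclideanSpace ℝ (Fin m) := fun x => ∑ i, ((x i : ℕ) : ℝ) • r i with hψ
  have hψL : ∀ x, ψ x ∈ L := by
    intro x
    refine Submodule.sum_mem (p := (AddSubgroup.toIntSubmodule L)) ?_ |>.out
    intro i _
    have : ((x i : ℕ) : ℝ) • r i = (x i : ℕ) • r i := Nat.cast_smul_eq_nsmul ℝ _ _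
    rw [this]
    exact AddSubgroup.nsmul_mem L (hrL i) _
  have hψbound : ∀ x, ‖(ψ x).2‖ ≤ (d + m) * N * η := by
    intro x
    have h1 : (ψ x).2 = ∑ i, ((x i : ℕ) : ℝ) • (r i).2 := by
      rw [hψ, Prod.snd_sum]
      simp
    rw [h1]
    refine le_trans (norm_sum_le _ _) ?_
    have h2 : ∀ i : Fin (d + m), ‖((x i : ℕ) : ℝ) • (r i).2‖ ≤ N * η := by
      intro i
      rw [norm_smul, Real.norm_eq_abs, abs_of_nonneg (by positivity)]
      have hx : ((x i : ℕ) : ℝ) ≤ N := by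
        have h5 := (x i).2
        exact_mod_cast Nat.lt_succ_iff.mp h5
      exact mul_le_mul hx (le_of_lt (hrsmall i)) (norm_nonneg _) (by positivity)
    calc ∑ i, ‖((x i : ℕ) : ℝ) • (r i).2‖ ≤ ∑ _i : Fin (d+m), N * η :=
          Finset.sum_le_sum (fun i _ => h2 i)
      _ = (d + m) * N * η := by
          rw [Finset.sum_const, Finset.card_univ, Fintype.card_fin, nsmul_eq_mul]
          push_cast
          ring
  set P : (ι → α) → EuclideanSpace ℝ (Fin d) × EuclideanSpace ℝ (Fin m) := fun w => ∑ j, ψ (w j) with hP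
  have hPL : ∀ w, P w ∈ L := fun w =>
    (Submodule.sum_mem (p := (AddSubgroup.toIntSubmodule L))
      (fun j _ => (hψL (w j) : _))).out
  have hPbound : ∀ w, ‖(P w).2‖ ≤ 1 := by
    intro w
    have h1 : (P w).2 = ∑ j, (ψ (w j)).2 := by rw [hP, Prod.snd_sum]
    rw [h1]
    refine le_trans (norm_sum_le _ _) ?_
    calc ∑ j, ‖(ψ (w j)).2‖ ≤ ∑ _j : ι, (d+m) * N * η :=
          Finset.sum_le_sum (fun j _ => hψbound (w j))
      _ = n * ((d+m) * N * η) := by simp [Finset.sum_const, hn]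
      _ ≤ 1 := by
          rw [hη, mul_one_div, ← mul_div_assoc, div_le_one (by positivity)]
          nlinarith [Nat.cast_nonneg (α := ℝ) n, Nat.cast_nonneg (α := ℝ) N,
            Nat.cast_nonneg (α := ℝ) d, Nat.cast_nonneg (α := ℝ) m]
  -- the coloring
  have hcol : ∀ w : ι → α, ∃ v : EuclideanSpace ℝ (Fin d) × EuclideanSpace ℝ (Fin m), v ∈ F ∧ (P w + v).1 ∈ Λ := by
    intro w
    obtain ⟨lam, hlamΛ, hlamball⟩ := hRball (P w).1
    obtain ⟨y', hy'W, hy'L⟩ := hsub hlamΛ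
    refine ⟨(lam, y') - P w, ⟨L.sub_mem hy'L (hPL w), ?_, ?_⟩, ?_⟩
    · have : ((lam, y') - P w).1 = lam - (P w).1 := rfl
      rw [this, ← dist_eq_norm]
      exact le_of_lt (by rwa [Metric.mem_ball] at hlamball)
    · have h0 : ((lam, y') - P w).2 = y' + (-(P w).2) := by
        simp [Prod.snd_sub, sub_eq_add_neg]
      rw [h0]
      refine le_trans (norm_add_le _ _) ?_
      have hy'n : ‖y'‖ ≤ CW := by
        have := hCW (subset_closure hy'W)
        simpa [Metric.mem_closedBall, dist_eq_norm] using this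
      have := hPbound w
      rw [norm_neg]
      linarith
    · have : P w + ((lam, y') - P w) = (lam, y') := by abel
      rw [this]
      exact hlamΛ
  choose col hcolF hcolΛ using hcol
  set C : (ι → α) → ↥F := fun w => ⟨col w, hcolF w⟩ with hC
  obtain ⟨l, cc, hmono⟩ := hHJ C
  -- variable coordinates
  set T : Finset ι := Finset.univ.filter (fun j => l.idxFun j = none) with hT
  have hTpos : 0 < T.card := by
    obtain ⟨j, hj⟩ := l.proper
    exact Finset.card_pos.mpr ⟨j, by simp [hT, hj]⟩
  set x₀ : α := fun _ => 0 with hx₀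
  have hstruct : ∀ x : α, P (l x) =
      (∑ j ∈ Tᶜ, ψ (l x₀ j)) + (T.card : ℝ) • ψ x := by
    intro x
    show (∑ j : ι, ψ ((l.idxFun j).getD x)) = _
    rw [← Finset.sum_add_sum_compl T (fun j => ψ ((l.idxFun j).getD x))]
    rw [add_comm]
    congr 1
    · apply Finset.sum_congr rfl
      intro j hj
      have hj' : l.idxFun j ≠ none := by
        simp only [hT, Finset.compl_filter, Finset.mem_filter] at hj
        exact hj.2
      rcases hopt : l.idxFun j with _ | a
      · exact absurd hopt hj'
      · simp [hopt]
    · have hcongr : ∀ j ∈ T, ψ ((l.idxFun j).getD x) = ψ x := by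
        intro j hj
        have hnone : l.idxFun j = none := by
          simpa [hT] using (Finset.mem_filter.mp hj).2
        rw [hnone]
        rfl
      rw [Finset.sum_congr rfl hcongr, Finset.sum_const, Nat.cast_smul_eq_nsmul ℝ]
  -- final data
  set Q : EuclideanSpace ℝ (Fin d) × EuclideanSpace ℝ (Fin m) := ∑ j ∈ Tᶜ, ψ (l x₀ j) with hQ
  set g : EuclideanSpace ℝ (Fin d) × EuclideanSpace ℝ (Fin m) := (cc : EuclideanSpace ℝ (Fin d) × EuclideanSpace ℝ (Fin m)) with hg
  refine ⟨(Q + g).1, fun i => (T.card : ℝ) • (r i).1, ?_, ?_⟩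
  · -- linear independence over ℤ
    rw [Fintype.linearIndependent_iff]
    intro gz hgz
    set coef : Fin (d+m) → ℝ := fun i => ((gz i * (T.card : ℤ) : ℤ) : ℝ) with hcoefdef
    have hkey : ∀ i, coef i • r i = (gz i * (T.card : ℤ)) • r i :=
      fun i => Int.cast_smul_eq_zsmul ℝ _ _
    have huL : (∑ i, coef i • r i) ∈ L := by
      refine (Submodule.sum_mem (p := (AddSubgroup.toIntSubmodule L)) ?_).out
      intro i _
      rw [hkey i]
      exact AddSubgroup.zsmul_mem L (hrL i) _
    have hufst : (∑ i, coef i • r i).1 = 0 := by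
      rw [Prod.fst_sum]
      have hstep : ∀ i : Fin (d+m), (coef i • r i).1 = gz i • ((T.card : ℝ) • (r i).1) := by
        intro i
        rw [Prod.smul_fst, hcoefdef]
        push_cast
        rw [mul_smul, Int.cast_smul_eq_zsmul ℝ]
      rw [Finset.sum_congr rfl (fun i _ => hstep i)]
      exact hgz
    have hu0 : (∑ i, coef i • r i) = 0 :=
      hinj _ huL 0 (AddSubgroup.zero_mem L) (by simp [hufst])
    have hcoefs := Fintype.linearIndependent_iff.mp hrli coef hu0
    intro i
    have h2 : gz i * (T.card : ℤ) = 0 := by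
      have h3 := hcoefs i
      rw [hcoefdef] at h3
      simp only [] at h3
      exact_mod_cast h3
    rcases mul_eq_zero.mp h2 with h | h
    · exact h
    · exact absurd h (by exact_mod_cast hTpos.ne')
  · -- grid membership
    intro c hc
    set x : α := fun i => (⟨c i, Nat.lt_succ_of_le (hc i)⟩ : Fin (N+1)) with hx
    have hmx := hmono x
    have hcolx : col (l x) = g := by
      rw [hg]
      exact congrArg Subtype.val hmx
    have hmem := hcolΛ (l x)
    rw [hcolx, hstruct x] at hmem
    have hfinal : (Q + (T.card : ℝ) • ψ x + g).1
        = (Q + g).1 + ∑ i, (c i : ℝ) • ((T.card : ℝ) • (r i).1) := by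
      have h1 : (Q + (T.card : ℝ) • ψ x + g).1 = (Q + g).1 + (T.card : ℝ) • (ψ x).1 := by
        simp only [Prod.fst_add, Prod.smul_fst]
        abel
      rw [h1]
      congr 1
      have h2 : (ψ x).1 = ∑ i, ((x i : ℕ) : ℝ) • (r i).1 := by
        rw [hψ, Prod.fst_sum]
        simp
      rw [h2, Finset.smul_sum]
      apply Finset.sum_congr rfl
      intro i _
      rw [smul_comm]
    rw [← hfinal]
    exact hmem

open Submodule Module Metric in
/-- let `Λ ⊆ ℝ^d` be a fully Euclidean Meyer set (a Meyer set
contained in some fully Euclidean model set) of rank `k`. Then: (a) any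
li-arithmetic progression of length `N ≥ 1` contained in `Λ` has rank `n ≤ k`;
and (b) for each `N`, `Λ` contains an li-arithmetic progression of length `N`
and rank `k`. -/
theorem stmt_18 {d : ℕ} (Λ : Set (EuclideanSpace ℝ (Fin d))) (hΛ : IsMeyerSet Λ)
    (hfe : ∃ (m : ℕ)
        (L : AddSubgroup (EuclideanSpace ℝ (Fin d) × EuclideanSpace ℝ (Fin m))),
        IsCPS d m L ∧ ∃ W : Set (EuclideanSpace ℝ (Fin m)),
          IsCompact (closure W) ∧ (interior W).Nonempty ∧ Λ ⊆ cutProject L W)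
    (k : ℕ) (hk : k = Module.finrank ℤ (Submodule.span ℤ Λ)) :
    (∀ (n N : ℕ), 1 ≤ N → ∀ (s : EuclideanSpace ℝ (Fin d))
        (r : Fin n → EuclideanSpace ℝ (Fin d)), LinearIndependent ℤ r →
        (∀ c : Fin n → ℕ, (∀ i, c i ≤ N) → s + ∑ i, (c i : ℝ) • r i ∈ Λ) →
        n ≤ k) ∧
    (∀ N : ℕ, HasLiAP Λ k N) := by
  classical
  obtain ⟨m, L, hcps, W, hWc, hWint, hsub⟩ := hfe
  obtain ⟨⟨hdisc, K, hKc, hKco⟩, hinj, hdense⟩ := hcps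
  haveI := hdisc
  set L' : Submodule ℤ (EuclideanSpace ℝ (Fin d) × EuclideanSpace ℝ (Fin m)) :=
    AddSubgroup.toIntSubmodule L with hL'
  have hmemL' : ∀ v, v ∈ L' ↔ v ∈ L := fun v => Iff.rfl
  haveI hdiscL' : DiscreteTopology ↥L' := hdisc
  haveI : IsZLattice ℝ L' := ⟨by
    rw [AddSubgroup.coe_toIntSubmodule]
    exact aux_span_top L K hKc hKco⟩
  haveI : Module.Finite ℤ ↥L' := inferInstance
  have hfrL' : Module.finrank ℤ ↥L' = d + m := by
    rw [ZLattice.rank ℝ L']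
    simp [finrank_prod, finrank_euclideanSpace]
  -- the image of the lattice under the first projection
  set f : (EuclideanSpace ℝ (Fin d) × EuclideanSpace ℝ (Fin m)) →ₗ[ℤ] EuclideanSpace ℝ (Fin d) :=
    LinearMap.fst ℤ _ _ with hf
  set M : Submodule ℤ (EuclideanSpace ℝ (Fin d)) := Submodule.map f L' with hM
  haveI : Module.Finite ℤ ↥M := Module.Finite.map L' f
  have hspanle : Submodule.span ℤ Λ ≤ M := by
    rw [Submodule.span_le]
    intro x hx
    obtain ⟨y', hy'W, hy'L⟩ := hsub hx
    exact ⟨(x, y'), hy'L, rfl⟩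
  haveI : IsNoetherian ℤ ↥M := isNoetherian_of_isNoetherianRing_of_finite ℤ ↥M
  have hfg : (Submodule.span ℤ Λ).FG := by
    have h1 : Submodule.map M.subtype (Submodule.comap M.subtype (Submodule.span ℤ Λ))
        = Submodule.span ℤ Λ := by
      rw [Submodule.map_comap_subtype, inf_eq_right.mpr hspanle]
    rw [← h1]
    exact (IsNoetherian.noetherian _).map _
  haveI hfinspan : Module.Finite ℤ ↥(Submodule.span ℤ Λ) := Module.Finite.iff_fg.mpr hfg
  -- part (a)
  have parta : ∀ (n N : ℕ), 1 ≤ N → ∀ (s : EuclideanSpace ℝ (Fin d))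
      (r : Fin n → EuclideanSpace ℝ (Fin d)), LinearIndependent ℤ r →
      (∀ c : Fin n → ℕ, (∀ i, c i ≤ N) → s + ∑ i, (c i : ℝ) • r i ∈ Λ) →
      n ≤ k := by
    intro n N hN s r hli hgrid
    have hsΛ : s ∈ Λ := by
      have h0 := hgrid (fun _ => 0) (fun _ => Nat.zero_le N)
      simpa using h0
    have hrmem : ∀ i, r i ∈ Submodule.span ℤ Λ := by
      intro i
      have h1 := hgrid (fun i' => if i' = i then 1 else 0)
        (fun i' => by by_cases h : i' = i <;> simp [h] <;> omega)
      have h2 : s + r i ∈ Λ := by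
        have h3 : ∑ i', ((if i' = i then (1:ℕ) else 0 : ℕ) : ℝ) • r i' = r i := by
          rw [Finset.sum_congr rfl
            (fun i' _ => by rw [show ((if i' = i then (1:ℕ) else 0 : ℕ) : ℝ)
              = if i' = i then (1:ℝ) else 0 by split <;> simp])]
          simp [ite_smul]
        rwa [h3] at h1
      have h4 : r i = (s + r i) - s := by abel
      rw [h4]
      exact Submodule.sub_mem _ (Submodule.subset_span h2) (Submodule.subset_span hsΛ)
    have hli' : LinearIndependent ℤ (fun i => (⟨r i, hrmem i⟩ : ↥(Submodule.span ℤ Λ))) := by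
      apply LinearIndependent.of_comp (Submodule.span ℤ Λ).subtype
      exact hli
    have hcard := hli'.fintype_card_le_finrank
    rwa [Fintype.card_fin, ← hk] at hcard
  refine ⟨parta, ?_⟩
  -- k = d + m
  have hge : d + m ≤ k := by
    obtain ⟨s0, r0, hli0, hgrid0⟩ :=
      aux_grid Λ hΛ.1 L ⟨⟨hdisc, K, hKc, hKco⟩, hinj, hdense⟩ W hWc hsub 1
    exact parta (d + m) 1 le_rfl s0 r0 hli0 hgrid0
  have hle : k ≤ d + m := by
    haveI : NoZeroSMulDivisors ℤ (EuclideanSpace ℝ (Fin d)) :=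
      have := IsAddTorsionFree.of_isTorsionFree ℝ (EuclideanSpace ℝ (Fin d)); inferInstance
    haveI : Module.Free ℤ ↥(Submodule.span ℤ Λ) := inferInstance
    set B := Module.Free.chooseBasis ℤ ↥(Submodule.span ℤ Λ) with hB
    set J := Module.Free.ChooseBasisIndex ℤ ↥(Submodule.span ℤ Λ) with hJ
    have hcardJ : Fintype.card J = k := by
      rw [hk, Module.finrank_eq_card_chooseBasisIndex]
    -- lift each basis vector to the lattice
    have hlift : ∀ j : J, ∃ z : EuclideanSpace ℝ (Fin d) × EuclideanSpace ℝ (Fin m),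
        z ∈ L' ∧ f z = (B j : EuclideanSpace ℝ (Fin d)) := by
      intro j
      have : (B j : EuclideanSpace ℝ (Fin d)) ∈ M := hspanle (B j).2
      obtain ⟨z, hz, hz2⟩ := this
      exact ⟨z, hz, hz2⟩
    choose z hzL hzf using hlift
    have hBli : LinearIndependent ℤ (fun j => (B j : EuclideanSpace ℝ (Fin d))) :=
      B.linearIndependent.map' (Submodule.span ℤ Λ).subtype (Submodule.ker_subtype _)
    have hzli : LinearIndependent ℤ (fun j => (⟨z j, hzL j⟩ : ↥L')) := by
      rw [Fintype.linearIndependent_iff]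
      intro gz hgz
      have h5 : (∑ j, gz j • z j) = 0 := by
        have h6 := congrArg (L'.subtype) hgz
        rw [map_sum, map_zero] at h6
        simpa using h6
      have h7 : ∑ j, gz j • (B j : EuclideanSpace ℝ (Fin d)) = 0 := by
        have h8 := congrArg f h5
        rw [map_sum, map_zero] at h8
        rw [← h8]
        apply Finset.sum_congr rfl
        intro j _
        rw [map_smul, hzf j]
      exact Fintype.linearIndependent_iff.mp hBli gz h7
    have hcard := hzli.fintype_card_le_finrank
    rwa [hcardJ, hfrL'] at hcard
  have hkdm : k = d + m := le_antisymm hle hge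
  intro N
  obtain ⟨s0, r0, hli0, hgrid0⟩ :=
    aux_grid Λ hΛ.1 L ⟨⟨hdisc, K, hKc, hKco⟩, hinj, hdense⟩ W hWc hsub N
  rw [HasLiAP, hkdm]
  exact ⟨s0, r0, hli0, hgrid0⟩
end

section
/- Let Λ ⊆ ℝ^d be relatively dense and suppose Λ = Λ₁ ∪ … ∪ Λ_l is a union of finitely many subsets. Then the set Γ := ⋃_{j=1}^{l} (Λ_j − Λ_j) is relatively dense in ℝ^d. -/
open scoped Pointwise

/-- if `Λ ⊆ ℝ^d` is relatively dense and `Λ = Λ₁ ∪ ⋯ ∪ Λ_l`, then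
`Γ = ⋃ⱼ (Λⱼ - Λⱼ)` is relatively dense in `ℝ^d`. -/
theorem stmt_19 {d l : ℕ} (Λ : Set (EuclideanSpace ℝ (Fin d)))
    (hΛ : RelativelyDense Λ)
    (Λs : Fin l → Set (EuclideanSpace ℝ (Fin d))) (hcover : Λ = ⋃ j, Λs j) :
    RelativelyDense (⋃ j, (Λs j - Λs j)) := by
  classical
  obtain ⟨R, hR, hdense⟩ := hΛ
  set c : Fin l → EuclideanSpace ℝ (Fin d) :=
    fun j => if h : (Λs j).Nonempty then h.choose else 0 with hc
  refine ⟨R + ∑ j, ‖c j‖, by positivity, fun x => ?_⟩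
  obtain ⟨y, hyΛ, hy⟩ := hdense x
  rw [hcover, Set.mem_iUnion] at hyΛ
  obtain ⟨j, hyj⟩ := hyΛ
  have hne : (Λs j).Nonempty := ⟨y, hyj⟩
  have hcj : c j ∈ Λs j := by
    simp only [hc, dif_pos hne]; exact hne.choose_spec
  refine ⟨y - c j, Set.mem_iUnion.2 ⟨j, Set.sub_mem_sub hyj hcj⟩, ?_⟩
  have h1 : dist (y - c j) y = ‖c j‖ := by
    simp [dist_eq_norm]
  have h2 : ‖c j‖ ≤ ∑ i, ‖c i‖ :=
    Finset.single_le_sum (fun i _ => norm_nonneg (c i)) (Finset.mem_univ j)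
  have := dist_triangle (y - c j) y x
  rw [Metric.mem_ball] at hy ⊢
  linarith
end
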